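/- arXiv:1803.11148 — 4 statements merged into one kernel-verified Lean document; each statement's English description precedes it below -/
import Mathlib

section
/- Let c : ℝ → G be a continuous one-parameter subgroup (c(0) = e and c(t+t') = c(t)c(t') for all t, t' ∈ ℝ). Let φ : G → ℂ be continuous and assume that the function F(t, h) = φ(c(t)⁻¹ h) admits a partial derivative ∂F/∂t at every point of ℝ × G which is jointly continuous on ℝ × G; set ψ(h) = (∂F/∂t)(0, h). Then for every s ∈ H the map t ↦ U(c(t))(π(φ)s) is differentiable at t = 0 with derivative π(ψ)s; in particular every vector of the form π(φ)s is differentiable along the one-parameter subgroup c. -/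
open MeasureTheory
open scoped InnerProductSpace

/-- If `c : ℝ → G` is a continuous one-parameter subgroup, `φ : G → ℂ` is
continuous, and the function `F(t, h) = φ(c(t)⁻¹ h)` admits a partial derivative in `t` at
every point which is jointly continuous on `ℝ × G`, with `ψ(h) = (∂F/∂t)(0, h)`, then for
every `s ∈ H` the map `t ↦ U(c(t))(π(φ)s)` is differentiable at `t = 0` with derivative
`π(ψ)s`. -/
theorem averaged_vector_differentiable_along_one_parameter_subgroup
    {G : Type*} [Group G] [TopologicalSpace G] [IsTopologicalGroup G]
    [CompactSpace G] [T2Space G] [MeasurableSpace G] [BorelSpace G]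
    (μ : Measure G) [μ.IsHaarMeasure] [IsProbabilityMeasure μ]
    {H : Type*} [NormedAddCommGroup H] [InnerProductSpace ℂ H] [CompleteSpace H]
    (U : G →* (H →L[ℂ] H))
    (hUnitary : ∀ (g : G) (x y : H), ⟪(U g) x, (U g) y⟫_ℂ = ⟪x, y⟫_ℂ)
    (hUcont : ∀ s : H, Continuous fun g => (U g) s)
    (c : ℝ → G) (hc_cont : Continuous c) (hc_zero : c 0 = 1)
    (hc_add : ∀ t t' : ℝ, c (t + t') = c t * c t')
    (φ : G → ℂ) (hφ : Continuous φ)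
    (F' : ℝ × G → ℂ) (hF'cont : Continuous F')
    (hderiv : ∀ (t : ℝ) (h : G), HasDerivAt (fun τ : ℝ => φ ((c τ)⁻¹ * h)) (F' (t, h)) t)
    (s : H) :
    HasDerivAt (fun t : ℝ => (U (c t)) (∫ g, φ g • (U g) s ∂μ))
      (∫ g, F' (0, g) • (U g) s ∂μ) 0 := by
  -- Step 1: rewrite `U (c t) (∫ φ g • U g s)` as `∫ φ ((c t)⁻¹ * g) • U g s`.
  have hcontφU : ∀ t : ℝ, Continuous fun g : G => φ ((c t)⁻¹ * g) • (U g) s := by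
    intro t
    exact (hφ.comp (continuous_const.mul continuous_id)).smul (hUcont s)
  have hint : ∀ t : ℝ, Integrable (fun g : G => φ ((c t)⁻¹ * g) • (U g) s) μ := by
    intro t
    exact (hcontφU t).integrable_of_hasCompactSupport
      (HasCompactSupport.of_compactSpace _)
  have key : ∀ t : ℝ, (U (c t)) (∫ g, φ g • (U g) s ∂μ)
      = ∫ g, φ ((c t)⁻¹ * g) • (U g) s ∂μ := by
    intro t
    have h0 : Integrable (fun g : G => φ g • (U g) s) μ :=
      (hφ.smul (hUcont s)).integrable_of_hasCompactSupport
        (HasCompactSupport.of_compactSpace _)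
    rw [← ContinuousLinearMap.integral_comp_comm _ h0]
    rw [← MeasureTheory.integral_mul_left_eq_self
      (fun g => φ ((c t)⁻¹ * g) • (U g) s) (c t)]
    congr 1
    funext g
    simp only [inv_mul_cancel_left, ContinuousLinearMap.map_smul]
    congr 1
    have : U (c t * g) = U (c t) * U g := map_mul U _ _
    rw [this]
    rfl
  -- Step 2: differentiate under the integral sign.
  have hbound : ∃ C : ℝ, ∀ p : ℝ × G, p.1 ∈ Set.Icc (-1 : ℝ) 1 → ‖F' p‖ ≤ C := by
    obtain ⟨C, hC⟩ := ((isCompact_Icc (a := (-1:ℝ)) (b := 1)).prod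
      isCompact_univ).exists_bound_of_continuousOn hF'cont.continuousOn
    exact ⟨C, fun p hp => hC p ⟨hp, Set.mem_univ _⟩⟩
  obtain ⟨C, hC⟩ := hbound
  have main := hasDerivAt_integral_of_dominated_loc_of_deriv_le
    (F := fun t g => φ ((c t)⁻¹ * g) • (U g) s)
    (F' := fun t g => F' (t, g) • (U g) s) (x₀ := 0) (μ := μ)
    (bound := fun g => C * ‖(U g) s‖) (s := Metric.ball (0:ℝ) 1) (Metric.ball_mem_nhds (0:ℝ) one_pos)
    (Filter.Eventually.of_forall fun t => (hint t).aestronglyMeasurable)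
    (hint 0)
    (((hF'cont.comp (Continuous.prodMk_right 0)).smul
        (hUcont s)).integrable_of_hasCompactSupport
        (HasCompactSupport.of_compactSpace _)).aestronglyMeasurable
    (Filter.Eventually.of_forall fun g t ht => by
      rw [norm_smul]
      refine mul_le_mul_of_nonneg_right ?_ (norm_nonneg _)
      exact hC (t, g) ⟨le_of_lt (by simpa using (abs_lt.mp (by simpa using ht)).1),
        le_of_lt (by simpa using (abs_lt.mp (by simpa using ht)).2)⟩)
    ((continuous_const.mul (hUcont s).norm).integrable_of_hasCompactSupport
      (HasCompactSupport.of_compactSpace _))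
    (Filter.Eventually.of_forall fun g t _ => (hderiv t g).smul_const ((U g) s))
  exact (main.2.congr_of_eventuallyEq (Filter.Eventually.of_forall key)).congr_deriv rfl
end

section
/- Let (V, ρ) be a finite-dimensional continuous unitary representation of G (V a finite-dimensional complex inner product space, ρ : G → (V →L[ℂ] V) a group homomorphism into unitary operators with g ↦ ρ(g)v continuous for each v). Then for all v, w ∈ V and all s, t ∈ H: ∫_G ∫_G ⟨ρ(g)v, ρ(h)w⟩_V · ⟨U(g)s, U(h)t⟩_H dμ(g) dμ(h) = ⟨s, π(C_{v,w}) t⟩_H, where C_{v,w} : G → ℂ is the matrix coefficient C_{v,w}(k) = ⟨v, ρ(k)w⟩_V. -/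
open MeasureTheory
open scoped InnerProductSpace

/-- For a finite-dimensional continuous unitary representation `(V, ρ)` of `G`,
all `v w ∈ V` and all `s t ∈ H`:
`∫∫ ⟨ρ(g)v, ρ(h)w⟩_V ⟨U(g)s, U(h)t⟩_H dμ(g) dμ(h) = ⟨s, π(C_{v,w})t⟩_H`, where
`C_{v,w}(k) = ⟨v, ρ(k)w⟩_V` is a matrix coefficient. -/
theorem double_average_inner_eq_matrix_coefficient_average
    {G : Type*} [Group G] [TopologicalSpace G] [IsTopologicalGroup G]
    [CompactSpace G] [T2Space G] [MeasurableSpace G] [BorelSpace G]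
    (μ : Measure G) [μ.IsHaarMeasure] [IsProbabilityMeasure μ]
    {H : Type*} [NormedAddCommGroup H] [InnerProductSpace ℂ H] [CompleteSpace H]
    (U : G →* (H →L[ℂ] H))
    (hUnitary : ∀ (g : G) (x y : H), ⟪(U g) x, (U g) y⟫_ℂ = ⟪x, y⟫_ℂ)
    (hUcont : ∀ s : H, Continuous fun g => (U g) s)
    {V : Type*} [NormedAddCommGroup V] [InnerProductSpace ℂ V] [FiniteDimensional ℂ V]
    (ρ : G →* (V →L[ℂ] V))
    (hρUnitary : ∀ (g : G) (x y : V), ⟪(ρ g) x, (ρ g) y⟫_ℂ = ⟪x, y⟫_ℂ)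
    (hρcont : ∀ v : V, Continuous fun g => (ρ g) v)
    (v w : V) (s t : H) :
    (∫ h, ∫ g, ⟪(ρ g) v, (ρ h) w⟫_ℂ * ⟪(U g) s, (U h) t⟫_ℂ ∂μ ∂μ)
      = ⟪s, ∫ k, ⟪v, (ρ k) w⟫_ℂ • (U k) t ∂μ⟫_ℂ := by
  -- `φ k = ⟪v, ρ k w⟫ * ⟪s, U k t⟫`
  set φ : G → ℂ := fun k => ⟪v, (ρ k) w⟫_ℂ * ⟪s, (U k) t⟫_ℂ with hφ
  have φcont : Continuous φ :=
    (continuous_const.inner (hρcont w)).mul (continuous_const.inner (hUcont t))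
  -- the integrand equals `φ (g⁻¹ * h)` by unitarity
  have key : ∀ g h : G, ⟪(ρ g) v, (ρ h) w⟫_ℂ * ⟪(U g) s, (U h) t⟫_ℂ = φ (g⁻¹ * h) := by
    intro g h
    have h1 : (ρ h) w = (ρ g) ((ρ (g⁻¹ * h)) w) := by
      rw [← ContinuousLinearMap.comp_apply, ← ContinuousLinearMap.mul_def, ← map_mul]
      simp
    have h2 : (U h) t = (U g) ((U (g⁻¹ * h)) t) := by
      rw [← ContinuousLinearMap.comp_apply, ← ContinuousLinearMap.mul_def, ← map_mul]
      simp
    rw [hφ]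
    simp only []
    rw [h1, h2, hρUnitary, hUnitary]
  simp_rw [key]
  -- Fubini for continuous functions on a compact space
  have hswap : (∫ h, ∫ g, φ (g⁻¹ * h) ∂μ ∂μ) = ∫ g, ∫ h, φ (g⁻¹ * h) ∂μ ∂μ := by
    apply integral_integral_swap_of_hasCompactSupport
    · exact φcont.comp (by fun_prop : Continuous fun p : G × G => p.2⁻¹ * p.1)
    · exact HasCompactSupport.of_compactSpace _
  rw [hswap]
  -- inner integral: left invariance
  have hinner : ∀ g : G, (∫ h, φ (g⁻¹ * h) ∂μ) = ∫ k, φ k ∂μ := fun g =>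
    integral_mul_left_eq_self φ g⁻¹
  simp_rw [hinner, integral_const, probReal_univ, one_smul]
  -- pull the inner product out of the Bochner integral
  have hInt : Integrable (fun k => ⟪v, (ρ k) w⟫_ℂ • (U k) t) μ :=
    (((continuous_const.inner (hρcont w))).smul (hUcont t)).integrable_of_hasCompactSupport
      (HasCompactSupport.of_compactSpace _)
  rw [← integral_inner hInt s]
  simp_rw [inner_smul_right]
  rfl
end

section
/- Let (V, ρ) be a finite-dimensional continuous unitary representation of G that is irreducible, i.e. the only subspaces W ⊆ V with ρ(g)W ⊆ W for all g ∈ G are {0} and V. Then for every unit vector u ∈ V and every w ∈ V one has (dim_ℂ V) · (C_{u,u} ⋆ C_{u,w}) = C_{u,w} as functions on G, where C_{v,w}(g) = ⟨v, ρ(g)w⟩ denotes the matrix coefficient and (φ ⋆ ψ)(g) = ∫_G φ(h) ψ(h⁻¹ g) dμ(h) the convolution with respect to the normalized Haar measure. -/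
open MeasureTheory
open scoped InnerProductSpace

/-- If `(V, ρ)` is an irreducible finite-dimensional continuous unitary
representation of `G`, then for every unit vector `u` and every `w ∈ V`,
`(dim V) · (C_{u,u} ⋆ C_{u,w}) = C_{u,w}`, where `C_{v,w}(g) = ⟨v, ρ(g)w⟩` and
`(φ ⋆ ψ)(g) = ∫ φ(h) ψ(h⁻¹ g) dμ(h)`. -/
theorem matrix_coefficient_convolution_idempotent
    {G : Type*} [Group G] [TopologicalSpace G] [IsTopologicalGroup G]
    [CompactSpace G] [T2Space G] [MeasurableSpace G] [BorelSpace G]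
    (μ : Measure G) [μ.IsHaarMeasure] [IsProbabilityMeasure μ]
    {V : Type*} [NormedAddCommGroup V] [InnerProductSpace ℂ V] [FiniteDimensional ℂ V]
    (ρ : G →* (V →L[ℂ] V))
    (hρUnitary : ∀ (g : G) (x y : V), ⟪(ρ g) x, (ρ g) y⟫_ℂ = ⟪x, y⟫_ℂ)
    (hρcont : ∀ v : V, Continuous fun g => (ρ g) v)
    (hirred : ∀ W : Submodule ℂ V, (∀ (g : G), ∀ v ∈ W, (ρ g) v ∈ W) → W = ⊥ ∨ W = ⊤)
    (u w : V) (hu : ‖u‖ = 1) :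
    ∀ g : G,
      (Module.finrank ℂ V : ℂ) * (∫ h, ⟪u, (ρ h) u⟫_ℂ * ⟪u, (ρ (h⁻¹ * g)) w⟫_ℂ ∂μ)
        = ⟪u, (ρ g) w⟫_ℂ := by
  have hu0 : u ≠ 0 := by intro h; rw [h, norm_zero] at hu; norm_num at hu
  have : Nontrivial V := ⟨u, 0, hu0⟩
  -- the integrand family
  set f : V → G → V := fun x h => ⟪(ρ h) u, x⟫_ℂ • (ρ h) u with hf
  have hcont : ∀ x, Continuous (f x) := fun x =>
    (((hρcont u).inner continuous_const).smul (hρcont u) : _)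
  have hint : ∀ x, Integrable (f x) μ := fun x =>
    (hcont x).integrable_of_hasCompactSupport
      (IsCompact.of_isClosed_subset isCompact_univ (isClosed_tsupport _) (Set.subset_univ _))
  -- the averaged operator T
  set T : Module.End ℂ V :=
    { toFun := fun x => ∫ h, f x h ∂μ
      map_add' := by
        intro x y
        rw [← integral_add (hint x) (hint y)]
        refine integral_congr_ae (Filter.Eventually.of_forall fun h => ?_)
        simp [hf, inner_add_right, add_smul]
      map_smul' := by
        intro c x
        rw [← integral_smul]
        refine integral_congr_ae (Filter.Eventually.of_forall fun h => ?_)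
        simp [hf, inner_smul_right, smul_smul] } with hT
  have hTapp : ∀ x, T x = ∫ h, f x h ∂μ := fun x => rfl
  -- T commutes with the representation
  have hcomm : ∀ (g : G) (x : V), (ρ g) (T x) = T ((ρ g) x) := by
    intro g x
    rw [hTapp, hTapp, ← ContinuousLinearMap.integral_comp_comm (ρ g) (hint x)]
    have key : ∀ h : G, (ρ g) (f x h) = f ((ρ g) x) (g * h) := by
      intro h
      have h1 : (ρ (g * h)) u = (ρ g) ((ρ h) u) := by rw [map_mul]; rfl
      simp only [hf, ContinuousLinearMap.map_smul, h1, hρUnitary g]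
    calc ∫ h, (ρ g) (f x h) ∂μ = ∫ h, f ((ρ g) x) (g * h) ∂μ := by
          exact integral_congr_ae (Filter.Eventually.of_forall key)
      _ = ∫ h, f ((ρ g) x) h ∂μ := integral_mul_left_eq_self _ g
  -- T has an eigenvalue c, and by irreducibility T = c • id
  obtain ⟨c, hc⟩ := Module.End.exists_eigenvalue T
  have hW : ∀ (g : G), ∀ v ∈ T.eigenspace c, (ρ g) v ∈ T.eigenspace c := by
    intro g v hv
    rw [Module.End.mem_eigenspace_iff] at hv ⊢
    rw [← hcomm, hv, ContinuousLinearMap.map_smul]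
  have hWtop : T.eigenspace c = ⊤ := by
    rcases hirred _ hW with h | h
    · exact absurd h hc
    · exact h
  have hTx : ∀ x : V, T x = c • x := by
    intro x
    have : x ∈ T.eigenspace c := hWtop ▸ Submodule.mem_top
    rwa [Module.End.mem_eigenspace_iff] at this
  -- compute c : c * dim = 1 via an orthonormal basis
  set d : ℕ := Module.finrank ℂ V with hd
  have hd0 : 0 < d := Module.finrank_pos
  set b := stdOrthonormalBasis ℂ V with hb
  have hnormρ : ∀ h : G, (⟪(ρ h) u, (ρ h) u⟫_ℂ) = 1 := by
    intro h
    rw [hρUnitary]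
    rw [inner_self_eq_norm_sq_to_K, hu]
    norm_num
  have htrace : c * (d : ℂ) = 1 := by
    have h1 : ∀ i, ⟪b i, T (b i)⟫_ℂ = c := by
      intro i
      rw [hTx, inner_smul_right, inner_self_eq_norm_sq_to_K, b.orthonormal.1 i]
      norm_num
    have h2 : ∀ i, ⟪b i, T (b i)⟫_ℂ = ∫ h, ⟪(ρ h) u, b i⟫_ℂ * ⟪b i, (ρ h) u⟫_ℂ ∂μ := by
      intro i
      rw [hTapp, ← integral_inner (hint (b i)) (b i)]
      refine integral_congr_ae (Filter.Eventually.of_forall fun h => ?_)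
      simp [hf, inner_smul_right, mul_comm]
    have h3 : ∑ i, ⟪b i, T (b i)⟫_ℂ = c * (d : ℂ) := by
      simp [h1, hd, mul_comm]
    have h4 : ∑ i, ⟪b i, T (b i)⟫_ℂ = 1 := by
      have : ∀ i, Integrable (fun h => ⟪(ρ h) u, b i⟫_ℂ * ⟪b i, (ρ h) u⟫_ℂ) μ := by
        intro i
        refine Continuous.integrable_of_hasCompactSupport
          (((hρcont u).inner continuous_const).mul (continuous_const.inner (hρcont u)))
          (IsCompact.of_isClosed_subset isCompact_univ (isClosed_tsupport _) (Set.subset_univ _))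
      calc ∑ i, ⟪b i, T (b i)⟫_ℂ
          = ∑ i, ∫ h, ⟪(ρ h) u, b i⟫_ℂ * ⟪b i, (ρ h) u⟫_ℂ ∂μ := by
            exact Finset.sum_congr rfl fun i _ => h2 i
        _ = ∫ h, ∑ i, ⟪(ρ h) u, b i⟫_ℂ * ⟪b i, (ρ h) u⟫_ℂ ∂μ :=
            (integral_finset_sum _ (fun i _ => this i)).symm
        _ = ∫ h, (1 : ℂ) ∂μ := by
            refine integral_congr_ae (Filter.Eventually.of_forall fun h => ?_)
            simp only [b.sum_inner_mul_inner, hnormρ]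
        _ = 1 := by simp
    rw [← h3, h4]
  -- conclusion
  intro g
  have hrw : ∀ h : G, (⟪u, (ρ (h⁻¹ * g)) w⟫_ℂ) = ⟪(ρ h) u, (ρ g) w⟫_ℂ := by
    intro h
    have : (ρ h) ((ρ (h⁻¹ * g)) w) = (ρ g) w := by
      rw [← ContinuousLinearMap.mul_apply, ← map_mul, mul_inv_cancel_left]
    rw [← hρUnitary h u ((ρ (h⁻¹ * g)) w), this]
  have hmain : (∫ h, ⟪u, (ρ h) u⟫_ℂ * ⟪u, (ρ (h⁻¹ * g)) w⟫_ℂ ∂μ)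
      = ⟪u, T ((ρ g) w)⟫_ℂ := by
    rw [hTapp, ← integral_inner (hint _) u]
    refine integral_congr_ae (Filter.Eventually.of_forall fun h => ?_)
    simp only [hrw, hf, inner_smul_right]
    ring
  rw [hmain, hTx, inner_smul_right, ← mul_assoc, mul_comm (d : ℂ) c, htrace, one_mul]
end

section
/- For all continuous functions s, s' : H × G → ℂ and every h₀ ∈ H, the following two iterated integrals are equal: ∫_H ∫_G ∫_H conj(s(k, g)) · s'(u⁻¹ k h₀, g u) dμ_H(u) dμ_G(g) dμ_H(k) = ∫_G (∫_H conj(s(k, g k⁻¹)) dμ_H(k)) · (∫_H s'(t, g h₀ t⁻¹) dμ_H(t)) dμ_G(g). (This is the isometry property of the map U(s)(g) = ∫_H s(h, g h⁻¹) dμ_H(h) between the two C*(H)-valued inner products appearing in the identification ℂ ⊗_{C*H} (L²(G) ⋊ H) ≅ J(G).) -/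
open MeasureTheory ComplexConjugate

section helpers

lemma compact_haar_isMulRightInvariant {K : Type*} [Group K] [TopologicalSpace K]
    [IsTopologicalGroup K] [CompactSpace K] [T2Space K] [MeasurableSpace K] [BorelSpace K]
    (μ : Measure K) [μ.IsHaarMeasure]
    [IsProbabilityMeasure μ] : μ.IsMulRightInvariant := by
  constructor
  intro g
  haveI : IsProbabilityMeasure (Measure.map (· * g) μ) :=
    Measure.isProbabilityMeasure_map (measurable_mul_const g).aemeasurable
  exact Measure.isHaarMeasure_eq_of_isProbabilityMeasure _ μ

lemma compact_haar_isInvInvariant {K : Type*} [Group K] [TopologicalSpace K]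
    [IsTopologicalGroup K] [CompactSpace K] [T2Space K] [MeasurableSpace K] [BorelSpace K]
    (μ : Measure K) [μ.IsHaarMeasure]
    [IsProbabilityMeasure μ] : μ.IsInvInvariant := by
  haveI := compact_haar_isMulRightInvariant μ
  haveI : IsProbabilityMeasure μ.inv := by
    show IsProbabilityMeasure (Measure.map Inv.inv μ)
    exact Measure.isProbabilityMeasure_map continuous_inv.measurable.aemeasurable
  haveI : μ.inv.IsHaarMeasure := { }
  exact ⟨Measure.isHaarMeasure_eq_of_isProbabilityMeasure _ μ⟩

/-- Continuity of a parametric integral over a compact space. -/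
lemma continuous_param_integral {X Y : Type*} [TopologicalSpace X] [CompactSpace X]
    [MeasurableSpace X] [BorelSpace X] [T2Space X] [TopologicalSpace Y]
    (ν : Measure X) [IsProbabilityMeasure ν]
    {f : X × Y → ℂ} (hf : Continuous f) :
    Continuous fun y => ∫ x, f (x, y) ∂ν := by
  rw [continuous_iff_continuousAt]
  intro y₀
  apply Metric.tendsto_nhds.2
  intro ε hε
  have hcont : Continuous fun p : X × Y => ‖f p - f (p.1, y₀)‖ := by fun_prop
  set n : Set (X × Y) := {p | ‖f p - f (p.1, y₀)‖ < ε / 2} with hn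
  have hopen : IsOpen n := isOpen_lt hcont continuous_const
  have hsub : (Set.univ : Set X) ×ˢ ({y₀} : Set Y) ⊆ n := by
    rintro ⟨x, y⟩ ⟨-, hy⟩
    simp only [Set.mem_singleton_iff] at hy
    subst hy
    simpa [hn] using half_pos hε
  obtain ⟨u, v, hu, hv, huu, hvv, huv⟩ :=
    generalized_tube_lemma isCompact_univ isCompact_singleton hopen hsub
  filter_upwards [hv.mem_nhds (hvv rfl)] with y hy
  have hint1 : Integrable (fun x => f (x, y)) ν :=
    Continuous.integrable_of_hasCompactSupport (by fun_prop)
      (HasCompactSupport.of_compactSpace _)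
  have hint0 : Integrable (fun x => f (x, y₀)) ν :=
    Continuous.integrable_of_hasCompactSupport (by fun_prop)
      (HasCompactSupport.of_compactSpace _)
  rw [dist_eq_norm, ← integral_sub hint1 hint0]
  calc ‖∫ x, (f (x, y) - f (x, y₀)) ∂ν‖ ≤ (ε / 2) * (ν Set.univ).toReal := by
        apply norm_integral_le_of_norm_le_const
        filter_upwards with x
        exact le_of_lt (huv ⟨huu (Set.mem_univ x), hy⟩)
    _ < ε := by
        simp only [measure_univ, ENNReal.toReal_one, mul_one]
        linarith

end helpers

/-- For continuous `s s' : H × G → ℂ` and `h₀ ∈ H` (with `H` a closed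
subgroup of the compact group `G`), the two iterated integrals agree:
`∫_H ∫_G ∫_H conj(s(k,g)) s'(u⁻¹ k h₀, g u) dμ_H(u) dμ_G(g) dμ_H(k)
  = ∫_G (∫_H conj(s(k, g k⁻¹)) dμ_H(k)) (∫_H s'(t, g h₀ t⁻¹) dμ_H(t)) dμ_G(g)`. -/
theorem iterated_integral_isometry_identity
    {G : Type*} [Group G] [TopologicalSpace G] [IsTopologicalGroup G]
    [CompactSpace G] [T2Space G] [MeasurableSpace G] [BorelSpace G]
    (μG : Measure G) [μG.IsHaarMeasure] [IsProbabilityMeasure μG]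
    (H : Subgroup G) (hH : IsClosed (H : Set G))
    (μH : Measure H) [μH.IsHaarMeasure] [IsProbabilityMeasure μH]
    (s s' : H × G → ℂ) (hs : Continuous s) (hs' : Continuous s') (h₀ : H) :
    (∫ k : H, ∫ g : G, ∫ u : H,
        conj (s (k, g)) * s' (u⁻¹ * k * h₀, g * (u : G)) ∂μH ∂μG ∂μH)
      = ∫ g : G,
          (∫ k : H, conj (s (k, g * (k : G)⁻¹)) ∂μH)
            * (∫ t : H, s' (t, g * (h₀ : G) * (t : G)⁻¹) ∂μH) ∂μG := by
  haveI : CompactSpace H := isCompact_iff_compactSpace.mp hH.isCompact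
  haveI : BorelSpace H := Subtype.borelSpace (H : Set G)
  haveI := compact_haar_isMulRightInvariant μG
  haveI := compact_haar_isInvInvariant μH
  set a : H → G → ℂ := fun k g => conj (s (k, g * (k : G)⁻¹)) with ha
  set b : H → G → ℂ := fun u g => s' (u, g * (h₀ : G) * (u : G)⁻¹) with hb
  have hconta : Continuous fun p : H × G => a p.1 p.2 := by
    apply (Complex.continuous_conj.comp hs).comp
    fun_prop
  have hcontb : Continuous fun p : H × G => b p.1 p.2 := by
    apply hs'.comp
    fun_prop
  -- `B g = ∫ t, b t g` is continuous in `g`.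
  have hB : Continuous fun g : G => ∫ t : H, b t g ∂μH :=
    continuous_param_integral μH hcontb
  -- Step 1 & 2: transform LHS to `∫ k ∫ g, a k g * B g`
  have step12 : (∫ k : H, ∫ g : G, ∫ u : H,
        conj (s (k, g)) * s' (u⁻¹ * k * h₀, g * (u : G)) ∂μH ∂μG ∂μH)
      = ∫ k : H, ∫ g : G, a k g * ∫ u : H, b u g ∂μH ∂μG ∂μH := by
    refine integral_congr_ae (Filter.Eventually.of_forall fun k => ?_)
    have huchange : ∀ g : G, (∫ u : H,
        conj (s (k, g)) * s' (u⁻¹ * k * h₀, g * (u : G)) ∂μH)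
        = ∫ u : H, conj (s (k, g)) * s' (u, g * ((k * h₀ * u⁻¹ : H) : G)) ∂μH := by
      intro g
      set φ : H → ℂ := fun u => conj (s (k, g)) * s' (u⁻¹ * k * h₀, g * (u : G)) with hφ
      have e1 : (∫ u : H, φ (k * h₀ * u⁻¹) ∂μH) = ∫ u : H, φ (k * h₀ * u) ∂μH :=
        integral_inv_eq_self (fun v => φ (k * h₀ * v)) μH
      have e2 : (∫ u : H, φ (k * h₀ * u) ∂μH) = ∫ u : H, φ u ∂μH :=
        integral_mul_left_eq_self φ (k * h₀)
      have e3 : ∀ u : H, φ (k * h₀ * u⁻¹)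
          = conj (s (k, g)) * s' (u, g * ((k * h₀ * u⁻¹ : H) : G)) := by
        intro u
        have h4 : (k * h₀ * u⁻¹)⁻¹ * k * h₀ = u := by group
        simp only [hφ, h4]
      rw [← e2, ← e1]
      exact integral_congr_ae (Filter.Eventually.of_forall fun u => e3 u)
    calc (∫ g : G, ∫ u : H,
          conj (s (k, g)) * s' (u⁻¹ * k * h₀, g * (u : G)) ∂μH ∂μG)
        = ∫ g : G, ∫ u : H,
            conj (s (k, g)) * s' (u, g * ((k * h₀ * u⁻¹ : H) : G)) ∂μH ∂μG :=
          integral_congr_ae (Filter.Eventually.of_forall huchange)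
      _ = ∫ g : G, ∫ u : H, a k g * b u g ∂μH ∂μG := by
          have h5 := integral_mul_right_eq_self
            (μ := μG) (fun g => ∫ u : H, a k g * b u g ∂μH) ((k : G))
          rw [← h5]
          refine integral_congr_ae (Filter.Eventually.of_forall fun g => ?_)
          refine integral_congr_ae (Filter.Eventually.of_forall fun u => ?_)
          simp only [ha, hb]
          push_cast
          norm_num [mul_assoc]
      _ = ∫ g : G, a k g * ∫ u : H, b u g ∂μH ∂μG := by
          refine integral_congr_ae (Filter.Eventually.of_forall fun g => ?_)
          exact integral_const_mul _ _
  rw [step12]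
  -- Step 3: swap the two outer integrals (Fubini for continuous functions)
  have hcswap : Continuous (Function.uncurry
      fun (k : H) (g : G) => a k g * ∫ u : H, b u g ∂μH) :=
    hconta.mul (hB.comp continuous_snd)
  rw [integral_integral_swap_of_hasCompactSupport hcswap
    (HasCompactSupport.of_compactSpace _)]
  -- Step 4: pull the constant factor out
  refine integral_congr_ae (Filter.Eventually.of_forall fun g => ?_)
  exact integral_mul_const _ _
end
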